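/- Let p be a prime with p ≡ 3 (mod 4) and let G be a group of order 4p with a normal subgroup P of order p such that the quotient G/P is cyclic of order 4. Then G contains an element of order 2p. -/
import Mathlib


/-- If `p` is a prime with `p ≡ 3 (mod 4)` and `G` is a group of order `4p` with a
normal subgroup `P` of order `p` whose quotient `G/P` is cyclic of order 4, then `G`
contains an element of order `2p`. -/
theorem exists_order_two_mul_p_of_cyclic_quotient
    (p : ℕ) (hp : p.Prime) (hmod : p % 4 = 3)
    (G : Type*) [Group G] (hcard : Nat.card G = 4 * p)
    (P : Subgroup G) [P.Normal] (hP : Nat.card P = p)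
    (hquot : Nonempty ((G ⧸ P) ≃* Multiplicative (ZMod 4))) :
    ∃ g : G, orderOf g = 2 * p := by
  obtain ⟨e⟩ := hquot
  haveI : Fact p.Prime := ⟨hp⟩
  have hpodd : p % 2 = 1 := by omega
  haveI : Finite G := Nat.finite_of_card_ne_zero (by rw [hcard]; omega)
  -- element of order 4 in the quotient
  have hq4 : orderOf (e.symm (Multiplicative.ofAdd (1 : ZMod 4))) = 4 := by
    rw [MulEquiv.orderOf_eq e.symm]
    simp [ZMod.addOrderOf_one 4]
  obtain ⟨g, hg⟩ := QuotientGroup.mk_surjective (e.symm (Multiplicative.ofAdd (1 : ZMod 4)))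
  have h4 : (4 : ℕ) ∣ orderOf g := by
    rw [← hq4, ← hg]
    exact orderOf_map_dvd (QuotientGroup.mk' P) g
  have hdvd : orderOf g ∣ 4 * p := hcard ▸ orderOf_dvd_natCard g
  obtain ⟨k, hk⟩ := h4
  have hkp : k ∣ p := (mul_dvd_mul_iff_left (by norm_num : (4:ℕ) ≠ 0)).mp (hk ▸ hdvd)
  rcases (Nat.Prime.eq_one_or_self_of_dvd hp k hkp) with hk1 | hkpp
  · -- orderOf g = 4 : conjugation argument
    subst hk1
    rw [mul_one] at hk
    haveI : Finite P := Subgroup.instFiniteSubtypeMem P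
    haveI : IsCyclic P := isCyclic_of_prime_card hP
    have hcAut : Nat.card (MulAut P) = p - 1 := by
      rw [IsCyclic.card_mulAut, hP, Nat.totient_prime hp]
    set α : MulAut P := MulAut.conjNormal g with hα
    have hα4 : orderOf α ∣ 2 ^ 2 := by
      have := orderOf_map_dvd (MulAut.conjNormal : G →* MulAut P) g
      rw [hk] at this; exact this
    have hαp : orderOf α ∣ p - 1 := hcAut ▸ orderOf_dvd_natCard α
    have hα2 : orderOf α ∣ 2 := by
      obtain ⟨i, hi, hαi⟩ := (Nat.dvd_prime_pow Nat.prime_two).mp hα4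
      interval_cases i
      · simp [hαi]
      · simp [hαi]
      · exfalso
        rw [hαi] at hαp
        obtain ⟨c, hc⟩ := hαp
        omega
    have hsq : α ^ 2 = 1 := orderOf_dvd_iff_pow_eq_one.mp hα2
    have hconj1 : MulAut.conjNormal (g ^ 2) = (1 : MulAut P) := by
      rw [map_pow, ← hα, hsq]
    have hcomm : ∀ x : P, Commute (g ^ 2) (x : G) := by
      intro x
      have h1 : ((MulAut.conjNormal (g ^ 2) x : P) : G) = x := by rw [hconj1]; rfl
      rw [MulAut.conjNormal_apply] at h1
      exact mul_inv_eq_iff_eq_mul.mp h1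
    obtain ⟨x, hx⟩ := exists_prime_orderOf_dvd_card' (G := P) p (by rw [hP])
    have hxG : orderOf (x : G) = p := by
      rw [← hx]
      exact orderOf_injective P.subtype P.subtype_injective x
    have hg2 : orderOf (g ^ 2) = 2 := by
      rw [orderOf_pow, hk]; norm_num
    refine ⟨g ^ 2 * x, ?_⟩
    rw [Commute.orderOf_mul_eq_mul_orderOf_of_coprime (hcomm x), hg2, hxG]
    rw [hg2, hxG]
    exact (Nat.coprime_primes Nat.prime_two hp).mpr (by omega)
  · -- orderOf g = 4p : take g^2
    rw [hkpp] at hk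
    refine ⟨g ^ 2, ?_⟩
    rw [orderOf_pow, hk]
    have : Nat.gcd (4 * p) 2 = 2 := Nat.gcd_eq_right ⟨2 * p, by ring⟩
    rw [this]
    omega
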